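/- arXiv:1809.00210 — 3 statements merged into one kernel-verified Lean document; each statement's English description precedes it below -/
import Mathlib

section
/- For sorted nonnegative reals d_1 ≤ ⋯ ≤ d_N, j* and p* as in the greedy construction (j* = max{j ≤ N−1 : ∑_{i≤j} d_i ≤ θN}, p* = (θN − ∑_{i≤j*} d_i)/d_{j*+1}, assuming ∑_{i=1}^N d_i > θN), and ε ∈ (0,1): (j* + p*)/N ≤ ε if and only if (1/N)·(∑_{i=1}^{⌊εN⌋} d_i + (εN − ⌊εN⌋) d_{⌊εN⌋+1}) ≥ θ. -/
/-- with `(j*, p*)` from the greedy construction, the worst-case probability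
`(j* + p*)/N ≤ ε` holds if and only if the fractional partial sum of the `εN` smallest
distances, divided by `N`, is at least `θ`. -/
theorem stmt_8 (N : ℕ) (hN : 0 < N) (d : ℕ → ℝ)
    (hd0 : ∀ i, i < N → 0 ≤ d i)
    (hmono : ∀ i j, i ≤ j → j < N → d i ≤ d j)
    (θ : ℝ) (hθ : 0 < θ) (hbig : θ * N < ∑ i ∈ Finset.range N, d i)
    (ε : ℝ) (hε : 0 < ε ∧ ε < 1)
    (jstar : ℕ) (hj1 : jstar < N)
    (hj2 : (∑ i ∈ Finset.range jstar, d i) ≤ θ * N)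
    (hj3 : ∀ j, j < N → (∑ i ∈ Finset.range j, d i) ≤ θ * N → j ≤ jstar)
    (pstar : ℝ)
    (hp : pstar = (θ * N - ∑ i ∈ Finset.range jstar, d i) / d jstar) :
    ((jstar : ℝ) + pstar) / N ≤ ε ↔
      (1 / N : ℝ) * ((∑ i ∈ Finset.range ⌊ε * N⌋₊, d i)
        + (ε * N - (⌊ε * N⌋₊ : ℝ)) * d ⌊ε * N⌋₊) ≥ θ := by
  obtain ⟨hε0, hε1⟩ := hε
  have hNpos : (0:ℝ) < N := by exact_mod_cast hN
  set k := ⌊ε * N⌋₊ with hk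
  have hεN0 : 0 ≤ ε * N := by positivity
  have hkle : (k:ℝ) ≤ ε * N := Nat.floor_le hεN0
  have hklt : ε * N < (k:ℝ) + 1 := Nat.lt_floor_add_one _
  have hεNltN : ε * N < N := by nlinarith
  have hkN : k < N := by
    have : (k:ℝ) < N := lt_of_le_of_lt hkle hεNltN
    exact_mod_cast this
  -- partial sum monotonicity
  have hsum_mono : ∀ a b : ℕ, a ≤ b → b ≤ N →
      (∑ i ∈ Finset.range a, d i) ≤ ∑ i ∈ Finset.range b, d i := by
    intro a b hab hbN
    refine Finset.sum_le_sum_of_subset_of_nonneg (Finset.range_subset_range.2 hab) ?_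
    intro i hi _
    exact hd0 i (lt_of_lt_of_le (Finset.mem_range.1 hi) hbN)
  -- θ N < S_{jstar+1}
  have hsucc : θ * N < ∑ i ∈ Finset.range (jstar + 1), d i := by
    rcases eq_or_lt_of_le (Nat.succ_le_of_lt hj1) with h | h
    · have h' : jstar + 1 = N := h
      rw [h']; exact hbig
    · by_contra hcon
      push_neg at hcon
      exact absurd (hj3 (jstar + 1) h hcon) (by omega)
  have hdpos : 0 < d jstar := by
    rw [Finset.sum_range_succ] at hsucc
    linarith
  have hpd : pstar * d jstar = θ * N - ∑ i ∈ Finset.range jstar, d i := by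
    rw [hp, div_mul_cancel₀]
    exact ne_of_gt hdpos
  have hp0 : 0 ≤ pstar := by
    rw [hp]
    apply div_nonneg (by linarith) (le_of_lt hdpos)
  have hp1 : pstar < 1 := by
    rw [hp, div_lt_one hdpos]
    rw [Finset.sum_range_succ] at hsucc
    linarith
  rw [div_le_iff₀ hNpos, ge_iff_le, one_div, ← div_eq_inv_mul, le_div_iff₀ hNpos]
  rcases lt_trichotomy jstar k with h | h | h
  · -- jstar < k : both sides true
    have h1 : (∑ i ∈ Finset.range (jstar + 1), d i) ≤ ∑ i ∈ Finset.range k, d i :=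
      hsum_mono _ _ h (le_of_lt hkN)
    have h2 : 0 ≤ (ε * N - (k:ℝ)) * d k :=
      mul_nonneg (by linarith) (hd0 k hkN)
    constructor
    · intro _; linarith
    · intro _
      have : ((jstar:ℝ)) + 1 ≤ (k:ℝ) := by exact_mod_cast h
      linarith
  · -- jstar = k
    subst h
    constructor
    · intro hle
      have hple : pstar ≤ ε * N - (k:ℝ) := by linarith
      have h2 : pstar * d k ≤ (ε * N - (k:ℝ)) * d k :=
        mul_le_mul_of_nonneg_right hple (le_of_lt hdpos)
      linarith
    · intro hge
      have h2 : pstar * d k ≤ (ε * N - (k:ℝ)) * d k := by linarith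
      have hple : pstar ≤ ε * N - (k:ℝ) :=
        le_of_mul_le_mul_right h2 hdpos
      linarith
  · -- k < jstar : both sides false
    have hkj : (k:ℝ) + 1 ≤ (jstar:ℝ) := by exact_mod_cast h
    constructor
    · intro hle
      exfalso; linarith
    · intro hge
      exfalso
      have hSk1 : (∑ i ∈ Finset.range (k + 1), d i) ≤ ∑ i ∈ Finset.range jstar, d i :=
        hsum_mono _ _ h (le_of_lt hj1)
      rw [Finset.sum_range_succ] at hSk1
      rcases lt_or_ge 0 (d k) with hdk | hdk
      · have : (ε * N - (k:ℝ)) * d k < 1 * d k :=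
          mul_lt_mul_of_pos_right (by linarith) hdk
        linarith
      · have hdk0 : d k = 0 := le_antisymm hdk (hd0 k hkN)
        have hSk0 : (∑ i ∈ Finset.range k, d i) ≤ 0 := by
          apply Finset.sum_nonpos
          intro i hi
          have := hmono i k (le_of_lt (Finset.mem_range.1 hi)) hkN
          linarith
        rw [hdk0] at hge
        nlinarith
end

section
/- Let k_1, …, k_N ∈ ℝ (not necessarily sorted), ε ∈ (0,1), and let σ be a permutation sorting the k_i in nondecreasing order. The supremum over t ∈ ℝ of εN·t − ∑_{i=1}^N (t − k_i)⁺ is attained at t* = k_{σ(⌊εN⌋+1)}, and its value equals ∑_{i=1}^{⌊εN⌋} k_{σ(i)} + (εN − ⌊εN⌋) k_{σ(⌊εN⌋+1)}. -/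
lemma card_filt (N a : ℕ) (h : a ≤ N) :
    (Finset.univ.filter fun i : Fin N => (i : ℕ) < a).card = a := by
  have : (Finset.univ.filter fun i : Fin N => (i : ℕ) < a)
      = Finset.image (Fin.castLE h) Finset.univ := by
    ext i
    simp only [Finset.mem_filter, Finset.mem_univ, true_and, Finset.mem_image]
    constructor
    · intro hi; exact ⟨⟨i, hi⟩, rfl⟩
    · rintro ⟨j, rfl⟩; exact j.isLt
  rw [this, Finset.card_image_of_injective _ (Fin.castLE_injective h)]
  simp

/-- for arbitrary `k ∈ ℝ^N`, `ε ∈ (0,1)` and a sorting permutation `σ`,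
the supremum over `t` of `εN·t − ∑ (t − k_i)⁺` is attained at `t* = k_{σ(⌊εN⌋+1)}`
(0-indexed: `k (σ ⟨⌊εN⌋, _⟩)`) and equals the sorted fractional partial sum. -/
theorem stmt_10 (N : ℕ) (hN : 0 < N) (ε : ℝ) (hε : 0 < ε ∧ ε < 1)
    (k : Fin N → ℝ) (σ : Equiv.Perm (Fin N))
    (hsort : Monotone fun i => k (σ i))
    (hm : ⌊ε * N⌋₊ < N) :
    IsGreatest {val : ℝ | ∃ t : ℝ, val = ε * N * t - ∑ i, max (t - k i) 0}
      ((∑ i ∈ Finset.univ.filter fun i : Fin N => (i : ℕ) < ⌊ε * N⌋₊, k (σ i))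
        + (ε * N - (⌊ε * N⌋₊ : ℝ)) * k (σ ⟨⌊ε * N⌋₊, hm⟩)) ∧
    ε * N * k (σ ⟨⌊ε * N⌋₊, hm⟩) - (∑ i, max (k (σ ⟨⌊ε * N⌋₊, hm⟩) - k i) 0)
      = (∑ i ∈ Finset.univ.filter fun i : Fin N => (i : ℕ) < ⌊ε * N⌋₊, k (σ i))
        + (ε * N - (⌊ε * N⌋₊ : ℝ)) * k (σ ⟨⌊ε * N⌋₊, hm⟩) := by
  obtain ⟨hε0, hε1⟩ := hε
  set m := ⌊ε * N⌋₊ with hm_def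
  set ts := k (σ ⟨m, hm⟩) with hts_def
  have hεN0 : (0:ℝ) ≤ ε * N := by positivity
  have hml : (m:ℝ) ≤ ε * N := Nat.floor_le hεN0
  have hmu : ε * N < (m:ℝ) + 1 := Nat.lt_floor_add_one _
  have hsum : ∀ t : ℝ, ∑ i, max (t - k i) 0 = ∑ i, max (t - k (σ i)) 0 := by
    intro t; rw [← Equiv.sum_comp σ (fun i => max (t - k i) 0)]
  -- split off: for any t, the sum splits over the filter
  have hsplit : ∀ t : ℝ, ∑ i, max (t - k (σ i)) 0
      = (∑ i ∈ Finset.univ.filter (fun i : Fin N => (i:ℕ) < m), max (t - k (σ i)) 0)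
        + ∑ i ∈ Finset.univ.filter (fun i : Fin N => ¬ (i:ℕ) < m), max (t - k (σ i)) 0 :=
    fun t => (Finset.sum_filter_add_sum_filter_not _ _ _).symm
  -- value at ts
  have key : ∑ i, max (ts - k i) 0
      = ∑ i ∈ Finset.univ.filter (fun i : Fin N => (i:ℕ) < m), (ts - k (σ i)) := by
    rw [hsum, hsplit]
    have h1 : ∀ i ∈ Finset.univ.filter (fun i : Fin N => (i:ℕ) < m),
        max (ts - k (σ i)) 0 = ts - k (σ i) := by
      intro i hi
      simp only [Finset.mem_filter] at hi
      have hle : k (σ i) ≤ ts := hsort (show i ≤ ⟨m, hm⟩ from le_of_lt hi.2)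
      exact max_eq_left (sub_nonneg.mpr hle)
    have h2 : ∀ i ∈ Finset.univ.filter (fun i : Fin N => ¬ (i:ℕ) < m),
        max (ts - k (σ i)) 0 = 0 := by
      intro i hi
      simp only [Finset.mem_filter] at hi
      have hle : ts ≤ k (σ i) := hsort (show (⟨m, hm⟩ : Fin N) ≤ i from not_lt.mp hi.2)
      exact max_eq_right (sub_nonpos.mpr hle)
    rw [Finset.sum_congr rfl h1, Finset.sum_congr rfl h2, Finset.sum_const_zero, add_zero]
  have hcard : (Finset.univ.filter fun i : Fin N => (i : ℕ) < m).card = m :=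
    card_filt N m hm.le
  have hval : ε * N * ts - ∑ i, max (ts - k i) 0
      = (∑ i ∈ Finset.univ.filter (fun i : Fin N => (i:ℕ) < m), k (σ i))
        + (ε * N - (m:ℝ)) * ts := by
    rw [key, Finset.sum_sub_distrib, Finset.sum_const, hcard, nsmul_eq_mul]
    ring
  refine ⟨⟨⟨ts, hval.symm⟩, ?_⟩, hval⟩
  rintro v ⟨t, rfl⟩
  rw [← hval]
  -- suffices: ε N (t - ts) ≤ ∑ (max(t-kσi,0) - max(ts-kσi,0))
  rw [hsum t, hsum ts]
  have main : ε * N * (t - ts)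
      ≤ ∑ i, (max (t - k (σ i)) 0 - max (ts - k (σ i)) 0) := by
    rcases le_total ts t with hle | hle
    · -- t ≥ ts : sum ≥ (m+1)(t - ts)
      have hnn : ∀ i : Fin N, 0 ≤ max (t - k (σ i)) 0 - max (ts - k (σ i)) 0 := by
        intro i
        have : max (ts - k (σ i)) 0 ≤ max (t - k (σ i)) 0 :=
          max_le_max (by linarith) le_rfl
        linarith
      have hstep : ((m:ℝ) + 1) * (t - ts)
          ≤ ∑ i ∈ Finset.univ.filter (fun i : Fin N => (i:ℕ) < m + 1),
              (max (t - k (σ i)) 0 - max (ts - k (σ i)) 0) := by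
        have heq : ∀ i ∈ Finset.univ.filter (fun i : Fin N => (i:ℕ) < m + 1),
            max (t - k (σ i)) 0 - max (ts - k (σ i)) 0 = t - ts := by
          intro i hi
          simp only [Finset.mem_filter] at hi
          have hle2 : k (σ i) ≤ ts := hsort (show i ≤ ⟨m, hm⟩ from Nat.lt_succ_iff.mp hi.2)
          rw [max_eq_left (by linarith), max_eq_left (by linarith)]
          ring
        rw [Finset.sum_congr rfl heq, Finset.sum_const, card_filt N (m+1) hm,
          nsmul_eq_mul, Nat.cast_add, Nat.cast_one]
      calc ε * N * (t - ts) ≤ ((m:ℝ) + 1) * (t - ts) := by nlinarith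
        _ ≤ ∑ i ∈ Finset.univ.filter (fun i : Fin N => (i:ℕ) < m + 1),
              (max (t - k (σ i)) 0 - max (ts - k (σ i)) 0) := hstep
        _ ≤ ∑ i, (max (t - k (σ i)) 0 - max (ts - k (σ i)) 0) :=
          Finset.sum_le_sum_of_subset_of_nonneg (Finset.filter_subset _ _)
            (fun i _ _ => hnn i)
    · -- t ≤ ts : sum ≥ m (t - ts)
      have hsplit2 := hsplit t
      have hsplit3 := hsplit ts
      have h2 : ∑ i ∈ Finset.univ.filter (fun i : Fin N => ¬ (i:ℕ) < m),
          (max (t - k (σ i)) 0 - max (ts - k (σ i)) 0) = 0 := by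
        apply Finset.sum_eq_zero
        intro i hi
        simp only [Finset.mem_filter] at hi
        have hle2 : ts ≤ k (σ i) := hsort (show (⟨m, hm⟩ : Fin N) ≤ i from not_lt.mp hi.2)
        rw [max_eq_right (by linarith), max_eq_right (by linarith)]
        ring
      have h1 : (m:ℝ) * (t - ts)
          ≤ ∑ i ∈ Finset.univ.filter (fun i : Fin N => (i:ℕ) < m),
              (max (t - k (σ i)) 0 - max (ts - k (σ i)) 0) := by
        have hb : ∀ i ∈ Finset.univ.filter (fun i : Fin N => (i:ℕ) < m),
            t - ts ≤ max (t - k (σ i)) 0 - max (ts - k (σ i)) 0 := by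
          intro i hi
          simp only [Finset.mem_filter] at hi
          have hle2 : k (σ i) ≤ ts := hsort (show i ≤ ⟨m, hm⟩ from le_of_lt hi.2)
          have hmx : t - k (σ i) ≤ max (t - k (σ i)) 0 := le_max_left _ _
          rw [max_eq_left (by linarith : (0:ℝ) ≤ ts - k (σ i))]
          linarith
        calc (m:ℝ) * (t - ts)
            = ∑ _i ∈ Finset.univ.filter (fun i : Fin N => (i:ℕ) < m), (t - ts) := by
              rw [Finset.sum_const, hcard, nsmul_eq_mul]
          _ ≤ _ := Finset.sum_le_sum hb
      have hfull : ∑ i, (max (t - k (σ i)) 0 - max (ts - k (σ i)) 0)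
          = (∑ i ∈ Finset.univ.filter (fun i : Fin N => (i:ℕ) < m),
              (max (t - k (σ i)) 0 - max (ts - k (σ i)) 0))
            + ∑ i ∈ Finset.univ.filter (fun i : Fin N => ¬ (i:ℕ) < m),
              (max (t - k (σ i)) 0 - max (ts - k (σ i)) 0) :=
        (Finset.sum_filter_add_sum_filter_not _ _ _).symm
      calc ε * N * (t - ts) ≤ (m:ℝ) * (t - ts) := by nlinarith
        _ ≤ _ := h1
        _ = ∑ i, (max (t - k (σ i)) 0 - max (ts - k (σ i)) 0) := by
            rw [hfull, h2, add_zero]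
  have := Finset.sum_sub_distrib (s := (Finset.univ : Finset (Fin N)))
    (f := fun i => max (t - k (σ i)) 0) (g := fun i => max (ts - k (σ i)) 0)
  nlinarith [main]
end

section
/- Let W₁, V ⊂ ℝ^{L+2} be disjoint convex sets where V = {(x, s, t) ∣ (g(x))⁺ < t − s} for an affine function g: ℝ^L → ℝ, and let W̄ = conv(W₁ ∪ {(x,s,t) ∣ g(x) = 0 and t − s = 0}). Then there exists κ ∈ [0,1] such that the halfspace {(x,s,t) ∣ κ·g(x) ≥ t − s} contains W̄ and is disjoint from V. -/
/-- separating hyperplane with slope in `[0,1]`. With affine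
`g(x) = ∑ w_i x_i + c`, `V = {(x,s,t) : (g x)⁺ < t − s}` and convex `W₁` disjoint from
`V`, there is `κ ∈ [0,1]` such that the halfspace `{(x,s,t) : κ·g(x) ≥ t − s}` contains
`conv(W₁ ∪ {(x,s,t) : g x = 0 ∧ t − s = 0})` and is disjoint from `V`. -/
theorem stmt_17 (L : ℕ) (w : Fin L → ℝ) (c : ℝ)
    (W₁ : Set ((Fin L → ℝ) × ℝ × ℝ)) (hW : Convex ℝ W₁)
    (hdisj : W₁ ∩ {p : (Fin L → ℝ) × ℝ × ℝ |
        max ((∑ i, w i * p.1 i) + c) 0 < p.2.2 - p.2.1} = ∅) :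
    ∃ κ ∈ Set.Icc (0 : ℝ) 1,
      convexHull ℝ (W₁ ∪ {p : (Fin L → ℝ) × ℝ × ℝ |
          (∑ i, w i * p.1 i) + c = 0 ∧ p.2.2 - p.2.1 = 0})
        ⊆ {p : (Fin L → ℝ) × ℝ × ℝ |
          κ * ((∑ i, w i * p.1 i) + c) ≥ p.2.2 - p.2.1} ∧
      {p : (Fin L → ℝ) × ℝ × ℝ |
          κ * ((∑ i, w i * p.1 i) + c) ≥ p.2.2 - p.2.1} ∩
        {p : (Fin L → ℝ) × ℝ × ℝ |
          max ((∑ i, w i * p.1 i) + c) 0 < p.2.2 - p.2.1} = ∅ := by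
  classical
  set G : (Fin L → ℝ) × ℝ × ℝ → ℝ := fun p => (∑ i, w i * p.1 i) + c with hGdef
  set F : (Fin L → ℝ) × ℝ × ℝ → ℝ := fun p => p.2.2 - p.2.1 with hFdef
  have key : ∀ p ∈ W₁, F p ≤ max (G p) 0 := by
    intro p hp
    by_contra h
    push_neg at h
    have : p ∈ W₁ ∩ {p : (Fin L → ℝ) × ℝ × ℝ |
        max ((∑ i, w i * p.1 i) + c) 0 < p.2.2 - p.2.1} := ⟨hp, h⟩
    rw [hdisj] at this
    exact this
  have Gcomb : ∀ (a b : ℝ) (p q : (Fin L → ℝ) × ℝ × ℝ), a + b = 1 →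
      G (a • p + b • q) = a * G p + b * G q := by
    intro a b p q hab
    simp only [hGdef]
    have h1 : ∀ i, w i * (a • p + b • q).1 i = a * (w i * p.1 i) + b * (w i * q.1 i) := by
      intro i
      simp [Prod.fst_add, Prod.smul_fst]
      ring
    rw [Finset.sum_congr rfl (fun i _ => h1 i), Finset.sum_add_distrib,
      ← Finset.mul_sum, ← Finset.mul_sum]
    have hb1 : b = 1 - a := by linarith
    subst hb1
    ring
  have Fcomb : ∀ (a b : ℝ) (p q : (Fin L → ℝ) × ℝ × ℝ),
      F (a • p + b • q) = a * F p + b * F q := by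
    intro a b p q
    simp [hFdef, Prod.snd_add, Prod.smul_snd]
    ring
  have cross : ∀ p ∈ W₁, ∀ q ∈ W₁, 0 < G p → G q < 0 →
      F p / G p ≤ F q / G q := by
    intro p hp q hq hgp hgq
    have hden : 0 < G p - G q := by linarith
    set a : ℝ := (-G q) / (G p - G q) with ha
    set b : ℝ := (G p) / (G p - G q) with hb
    have ha0 : 0 ≤ a := div_nonneg (by linarith) (by linarith)
    have hb0 : 0 ≤ b := div_nonneg (by linarith) (by linarith)
    have hab : a + b = 1 := by
      rw [ha, hb, ← add_div, div_eq_one_iff_eq hden.ne']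
      ring
    have hr : a • p + b • q ∈ W₁ := hW hp hq ha0 hb0 hab
    have hGr : G (a • p + b • q) = 0 := by
      rw [Gcomb a b p q hab, ha, hb]
      field_simp
      ring
    have hFr := key _ hr
    rw [hGr] at hFr
    simp at hFr
    rw [Fcomb a b p q] at hFr
    have ha' : a * (G p - G q) = -G q := div_mul_cancel₀ _ hden.ne'
    have hb' : b * (G p - G q) = G p := div_mul_cancel₀ _ hden.ne'
    have h3 : (a * F p + b * F q) * (G p - G q) ≤ 0 :=
      mul_nonpos_of_nonpos_of_nonneg hFr hden.le
    have he : (a * F p + b * F q) * (G p - G q) = -G q * F p + G p * F q := by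
      linear_combination F p * ha' + F q * hb'
    rw [he] at h3
    have hq' : F q / G q = (-F q) / (-G q) := by rw [neg_div_neg_eq]
    rw [hq', div_le_div_iff₀ hgp (by linarith : (0:ℝ) < -G q)]
    nlinarith [h3]
  -- the slope set
  set S : Set ℝ := insert 0 ((fun p => F p / G p) '' {p | p ∈ W₁ ∧ 0 < G p}) with hS
  have hSne : S.Nonempty := ⟨0, Set.mem_insert _ _⟩
  have hSle1 : ∀ x ∈ S, x ≤ 1 := by
    rintro x (rfl | ⟨p, ⟨hp, hgp⟩, rfl⟩)
    · exact zero_le_one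
    · have := key p hp
      have hle : F p ≤ G p := le_trans this (max_le le_rfl hgp.le)
      exact (div_le_one hgp).mpr hle
  have hSbdd : BddAbove S := ⟨1, hSle1⟩
  set κ : ℝ := sSup S with hκ
  have hκ0 : 0 ≤ κ := le_csSup hSbdd (Set.mem_insert _ _)
  have hκ1 : κ ≤ 1 := csSup_le hSne hSle1
  -- main inequality on W₁
  have hmain : ∀ p ∈ W₁, F p ≤ κ * G p := by
    intro p hp
    rcases lt_trichotomy (G p) 0 with hg | hg | hg
    · -- κ ≤ F p / G p
      have hub : ∀ x ∈ S, x ≤ F p / G p := by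
        rintro x (rfl | ⟨q, ⟨hq, hgq⟩, rfl⟩)
        · have hFp : F p ≤ 0 := by
            have := key p hp
            simpa [max_eq_right hg.le] using this
          have : 0 ≤ F p / G p := div_nonneg_iff.mpr (Or.inr ⟨hFp, hg.le⟩)
          linarith
        · exact cross q hq p hp hgq hg
      have hκle : κ ≤ F p / G p := csSup_le hSne hub
      have := mul_le_mul_of_nonpos_right hκle hg.le
      rw [div_mul_cancel₀ _ hg.ne] at this
      linarith
    · have hFp : F p ≤ 0 := by
        have := key p hp
        simpa [hg] using this
      rw [hg, mul_zero]
      exact hFp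
    · have hmem : F p / G p ∈ S :=
        Set.mem_insert_of_mem _ ⟨p, ⟨hp, hg⟩, rfl⟩
      have hle : F p / G p ≤ κ := le_csSup hSbdd hmem
      calc F p = (F p / G p) * G p := by rw [div_mul_cancel₀ _ hg.ne']
        _ ≤ κ * G p := mul_le_mul_of_nonneg_right hle hg.le
  refine ⟨κ, ⟨hκ0, hκ1⟩, ?_, ?_⟩
  · apply convexHull_min
    · rintro p (hp | ⟨hg, hf⟩)
      · exact hmain p hp
      · show κ * ((∑ i, w i * p.1 i) + c) ≥ p.2.2 - p.2.1
        rw [hg, hf, mul_zero]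
    · intro p hp q hq a b ha0 hb0 hab
      show κ * G (a • p + b • q) ≥ F (a • p + b • q)
      rw [Gcomb a b p q hab, Fcomb a b p q]
      have h1 : F p ≤ κ * G p := hp
      have h2 : F q ≤ κ * G q := hq
      nlinarith
  · ext p
    simp only [Set.mem_inter_iff, Set.mem_setOf_eq, Set.mem_empty_iff_false, iff_false,
      not_and]
    intro h1 h2
    have hmax1 : (∑ i, w i * p.1 i) + c ≤ max ((∑ i, w i * p.1 i) + c) 0 := le_max_left _ _
    have hmax0 : (0:ℝ) ≤ max ((∑ i, w i * p.1 i) + c) 0 := le_max_right _ _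
    have hG : G p = (∑ i, w i * p.1 i) + c := rfl
    rcases le_or_gt ((∑ i, w i * p.1 i) + c) 0 with hg | hg
    · have : κ * ((∑ i, w i * p.1 i) + c) ≤ 0 := mul_nonpos_of_nonneg_of_nonpos hκ0 hg
      linarith
    · have : κ * ((∑ i, w i * p.1 i) + c) ≤ (∑ i, w i * p.1 i) + c := by
        nlinarith
      linarith
end
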